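/- For every Δ, m ∈ Z_{≥1}, the maximum number of differing columns of a rank-m Δ-modular integer matrix is at most 3^m · Δ. -/

import Mathlib

/-- `A` has differing columns: no column is zero and no two columns are equal
or negatives of each other. -/
def DiffCols {m n : ℕ} (A : Matrix (Fin m) (Fin n) ℤ) : Prop :=
  (∀ j, (fun i => A i j) ≠ 0) ∧
  ∀ j j' : Fin n, j ≠ j' →
    (fun i => A i j) ≠ (fun i => A i j') ∧ (fun i => A i j) ≠ (fun i => -A i j')

/-- `A` is `Δ`-modular: every `m × m` minor has absolute value at most `Δ`. -/
def DMod {m n : ℕ} (A : Matrix (Fin m) (Fin n) ℤ) (Δ : ℤ) : Prop :=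
  ∀ g : Fin m → Fin n, |(A.submatrix id g).det| ≤ Δ

open Matrix Submodule Module

/-- Torsion step: a full-finrank submodule of `ℤ^m` meets every line. -/
lemma aux_torsion {m : ℕ} (N : Submodule ℤ (Fin m → ℤ)) (hN : finrank ℤ N = m)
    (x : Fin m → ℤ) : ∃ r : ℤ, r ≠ 0 ∧ r • x ∈ N := by
  by_contra hcon
  push_neg at hcon
  have hfr : finrank ℤ (Fin m → ℤ) = m := by simp
  have hq : finrank ℤ ((Fin m → ℤ) ⧸ N) = 0 := by
    have := Submodule.finrank_quotient_add_finrank N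
    omega
  have hli : LinearIndependent ℤ (fun _ : Fin 1 => Submodule.Quotient.mk (p := N) x) := by
    rw [Fintype.linearIndependent_iff]
    intro c hc i
    by_contra hc0
    have hmem : c i • x ∈ N := by
      have : (Finset.univ : Finset (Fin 1)).sum (fun k => c k • Submodule.Quotient.mk (p := N) x)
          = c i • Submodule.Quotient.mk (p := N) x := by
        rw [Finset.sum_eq_single i] <;> simp [Subsingleton.elim _ i]
      rw [this] at hc
      have : Submodule.Quotient.mk (p := N) (c i • x) = 0 := by
        rw [Submodule.Quotient.mk_smul]; exact hc
      exact (Submodule.Quotient.mk_eq_zero N).mp this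
    exact hcon (c i) hc0 hmem
  have := hli.fintype_card_le_finrank
  simp [hq] at this

/-- From full rank, a nonsingular `m × m` submatrix exists. -/
lemma exists_det_ne_zero {m n : ℕ} (A : Matrix (Fin m) (Fin n) ℤ) (hrank : A.rank = m) :
    ∃ g : Fin m → Fin n, (A.submatrix id g).det ≠ 0 := by
  classical
  have hN : finrank ℤ (span ℤ (Set.range Aᵀ)) = m := by
    have h := Matrix.rank_eq_finrank_span_cols A; rw [hrank] at h; exact h.symm
  set cQ : Fin n → (Fin m → ℚ) := fun j i => (A i j : ℚ) with hcQ
  have hcast : ∀ v ∈ span ℤ (Set.range Aᵀ),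
      (fun i => (v i : ℚ)) ∈ span ℚ (Set.range cQ) := by
    intro v hv
    induction hv using Submodule.span_induction with
    | mem w hw =>
        obtain ⟨j, rfl⟩ := hw
        exact subset_span ⟨j, rfl⟩
    | zero =>
        have : (fun i => (((0 : Fin m → ℤ)) i : ℚ)) = 0 := by funext i; simp
        rw [this]; exact (span ℚ (Set.range cQ)).zero_mem
    | add w₁ w₂ _ _ h1 h2 =>
        have : (fun i => ((w₁ + w₂) i : ℚ)) = (fun i => (w₁ i : ℚ)) + (fun i => (w₂ i : ℚ)) := by
          funext i; simp
        rw [this]; exact (span ℚ (Set.range cQ)).add_mem h1 h2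
    | smul r w _ h =>
        have : (fun i => ((r • w) i : ℚ)) = (r : ℚ) • (fun i => (w i : ℚ)) := by
          funext i; simp [smul_eq_mul]
        rw [this]; exact (span ℚ (Set.range cQ)).smul_mem _ h
  have hsingle : ∀ i₀ : Fin m, (Pi.single i₀ 1 : Fin m → ℚ) ∈ span ℚ (Set.range cQ) := by
    intro i₀
    obtain ⟨r, hr0, hrmem⟩ := aux_torsion _ hN (Pi.single i₀ 1)
    have h1 := hcast _ hrmem
    have h2 : (fun i => ((r • (Pi.single i₀ 1 : Fin m → ℤ)) i : ℚ))
        = (r : ℚ) • (Pi.single i₀ 1 : Fin m → ℚ) := by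
      funext i
      by_cases h : i = i₀ <;> simp [Pi.single_apply, h]
    rw [h2] at h1
    have := (span ℚ (Set.range cQ)).smul_mem ((r : ℚ)⁻¹) h1
    rwa [smul_smul, inv_mul_cancel₀ (by exact_mod_cast hr0), one_smul] at this
  have htop : span ℚ (Set.range cQ) = ⊤ := by
    rw [eq_top_iff, ← (Pi.basisFun ℚ (Fin m)).span_eq, span_le]
    rintro _ ⟨i, rfl⟩
    simpa using hsingle i
  obtain ⟨b, hbsub, hbspan, hbli⟩ := exists_linearIndependent ℚ (Set.range cQ)
  rw [htop] at hbspan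
  haveI : Fintype b := (hbli.set_finite_of_isNoetherian).fintype
  let bb : Basis b ℚ (Fin m → ℚ) := Basis.mk hbli (by rw [Subtype.range_coe, hbspan])
  have hcardb : Fintype.card b = m := by
    have := Module.finrank_eq_card_basis bb
    simpa using this.symm
  let e : Fin m ≃ b := (Fintype.equivFinOfCardEq hcardb).symm
  have hchoose : ∀ k : Fin m, ∃ j : Fin n, cQ j = (e k : Fin m → ℚ) := fun k => by
    obtain ⟨j, hj⟩ := hbsub (e k).2
    exact ⟨j, hj⟩
  choose g hg using hchoose
  refine ⟨g, ?_⟩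
  have hliQ : LinearIndependent ℚ (fun k => cQ (g k)) := by
    have he : (fun k => cQ (g k)) = (fun x : b => (x : Fin m → ℚ)) ∘ e := by
      funext k; simp [hg k]
    rw [he]
    exact hbli.comp e e.injective
  have hM : LinearIndependent ℚ
      (fun k => ((A.submatrix id g).map (fun z : ℤ => (z : ℚ)))ᵀ k) := by
    convert hliQ using 2; rfl
  have hunit := Matrix.linearIndependent_cols_iff_isUnit.mp hM
  have hdetQ : ((A.submatrix id g).map (fun z : ℤ => (z : ℚ))).det ≠ 0 :=
    ((Matrix.isUnit_iff_isUnit_det _).mp hunit).ne_zero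
  intro h0
  apply hdetQ
  have : ((A.submatrix id g).map (fun z : ℤ => (z : ℚ))).det
      = ((A.submatrix id g).det : ℚ) := by
    rw [show ((A.submatrix id g).map (fun z : ℤ => (z : ℚ)))
        = (Int.castRingHom ℚ).mapMatrix (A.submatrix id g) from rfl, ← RingHom.map_det]
    rfl
  rw [this, h0]
  simp

/-- The index of the column span of a nonsingular integer matrix equals `|det|`. -/
lemma index_span_cols {m : ℕ} (B : Matrix (Fin m) (Fin m) ℤ) (hB : B.det ≠ 0) :
    (Submodule.span ℤ (Set.range Bᵀ)).toAddSubgroup.index = B.det.natAbs := by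
  classical
  set N := span ℤ (Set.range Bᵀ) with hNdef
  have hli : LinearIndependent ℤ Bᵀ := by
    apply Fintype.linearIndependent_iff.mpr
    intro c hc
    have h0 : B *ᵥ c = 0 := by
      funext i
      have := congrFun hc i
      simpa [Matrix.mulVec, dotProduct, mul_comm] using this
    have hdc : B.det • c = 0 := by
      have h1 := congrArg (fun v => B.adjugate *ᵥ v) h0
      simpa [Matrix.mulVec_mulVec, Matrix.adjugate_mul, Matrix.smul_mulVec,
        Matrix.one_mulVec] using h1
    intro i
    have := congrFun hdc i
    simp only [Pi.smul_apply, smul_eq_mul, Pi.zero_apply, mul_eq_zero] at this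
    tauto
  let bC : Basis (Fin m) ℤ N := Basis.span hli
  obtain ⟨k, snf⟩ := N.smithNormalForm (Pi.basisFun ℤ (Fin m))
  have hk : k = m := by
    have e := bC.indexEquiv snf.bN
    simpa using (Fintype.card_congr e).symm
  have hk' : m = k := hk.symm
  subst hk'
  obtain ⟨bM, bN, f, a, hsnf⟩ := snf
  have hidx : N.toAddSubgroup.index = ∏ i, (a i).natAbs := by
    have h := Basis.SmithNormalForm.toAddSubgroup_index_eq_pow_mul_prod
      (⟨bM, bN, f, a, hsnf⟩ : Basis.SmithNormalForm N (Fin m) m)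
    simpa [Ideal.span_singleton_toAddSubgroup_eq_zmultiples, Int.index_zmultiples] using h
  rw [hidx]
  -- relate ∏ a to det B
  let fe : Fin m ≃ Fin m := Equiv.ofBijective f (Finite.injective_iff_bijective.mp f.injective)
  let R : Matrix (Fin m) (Fin m) ℤ := Matrix.of fun i k => bM (f k) i
  let P : Matrix (Fin m) (Fin m) ℤ := Matrix.of fun i k => (bN k : Fin m → ℤ) i
  let U : Matrix (Fin m) (Fin m) ℤ := bN.toMatrix ⇑bC
  have hBPU : B = P * U := by
    ext i j
    have hsum : ((bC j : N) : Fin m → ℤ)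
        = ∑ k, bN.repr (bC j) k • ((bN k : N) : Fin m → ℤ) := by
      have := bN.sum_repr (bC j)
      calc ((bC j : N) : Fin m → ℤ)
          = ((∑ k, bN.repr (bC j) k • bN k : N) : Fin m → ℤ) := by rw [this]
        _ = ∑ k, bN.repr (bC j) k • ((bN k : N) : Fin m → ℤ) := by
            push_cast
            rfl
    have hcol : ((bC j : N) : Fin m → ℤ) = Bᵀ j := congrArg Subtype.val (Basis.span_apply hli j)
    have := congrFun (hcol.symm.trans hsum) i
    simpa [Matrix.mul_apply, P, U, Basis.toMatrix_apply, mul_comm] using this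
  have hPRD : P = R * Matrix.diagonal a := by
    ext i k
    have := congrFun (hsnf k) i
    simpa [P, R, Matrix.mul_diagonal, mul_comm] using this
  have hUunit : IsUnit U.det := by
    haveI := bN.invertibleToMatrix bC
    exact Matrix.isUnit_det_of_invertible U
  have hRunit : IsUnit R.det := by
    have hReq : R = (Pi.basisFun ℤ (Fin m)).toMatrix ⇑(bM.reindex fe.symm) := by
      ext i k
      simp [R, Basis.toMatrix_apply, Basis.reindex_apply, fe, Equiv.ofBijective]
    rw [hReq]
    haveI := (Pi.basisFun ℤ (Fin m)).invertibleToMatrix (bM.reindex fe.symm)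
    exact Matrix.isUnit_det_of_invertible _
  have hnat1 : ∀ u : ℤ, IsUnit u → u.natAbs = 1 := fun u hu => by
    rcases Int.isUnit_iff.mp hu with h | h <;> simp [h]
  have : B.det.natAbs = R.det.natAbs * (∏ i, (a i).natAbs) * U.det.natAbs := by
    rw [hBPU, hPRD, Matrix.det_mul, Matrix.det_mul, Matrix.det_diagonal]
    rw [Int.natAbs_mul, Int.natAbs_mul,
      show (∏ i, a i).natAbs = ∏ i, (a i).natAbs from map_prod Int.natAbsHom a Finset.univ]
  rw [this, hnat1 _ hUunit, hnat1 _ hRunit]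
  ring

theorem stmt8 (Δ m : ℕ) (hΔ : 1 ≤ Δ) (hm : 1 ≤ m) :
    ∀ (n : ℕ) (A : Matrix (Fin m) (Fin n) ℤ),
      A.rank = m → DiffCols A → DMod A (Δ : ℤ) → n ≤ 3 ^ m * Δ := by
  intro n A hrank hdiff hmod
  classical
  obtain ⟨g₀, hg₀⟩ := exists_det_ne_zero A hrank
  set F : (Fin m → Fin n) → ℕ := fun g => ((A.submatrix id g).det).natAbs with hF
  obtain ⟨g, -, hg⟩ := Finset.exists_mem_eq_sup (Finset.univ : Finset (Fin m → Fin n))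
    ⟨g₀, Finset.mem_univ _⟩ F
  set B : Matrix (Fin m) (Fin m) ℤ := A.submatrix id g with hBdef
  set D : ℕ := B.det.natAbs with hDdef
  have hmax : ∀ g' : Fin m → Fin n, ((A.submatrix id g').det).natAbs ≤ D := by
    intro g'
    have := Finset.le_sup (f := F) (Finset.mem_univ g')
    rw [hg] at this
    exact this
  have hd0 : B.det ≠ 0 := by
    intro h
    have h1 := hmax g₀
    have hD0 : D = 0 := by rw [hDdef, h]; rfl
    rw [hD0, Nat.le_zero, Int.natAbs_eq_zero] at h1
    exact hg₀ h1
  have hDpos : 0 < D := Nat.pos_of_ne_zero (fun h => hd0 (Int.natAbs_eq_zero.mp h))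
  set d : ℤ := (D : ℤ) with hddef
  have hdpos : 0 < d := by rw [hddef]; exact_mod_cast hDpos
  set u : Fin n → Fin m → ℤ := fun j => B.cramer (fun i => A i j) with hu
  have hub : ∀ j i, |u j i| ≤ d := by
    intro j i
    rw [hu]
    simp only [Matrix.cramer_apply]
    have hupd : B.updateCol i (fun r => A r j) = A.submatrix id (Function.update g i j) := by
      ext r c
      by_cases hc : c = i
      · subst hc; simp [Matrix.updateCol_apply]
      · rw [Matrix.updateCol_apply, if_neg hc]
        simp [hBdef, Matrix.submatrix_apply, Function.update_of_ne hc]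
    rw [hupd]
    rw [Int.abs_eq_natAbs, hddef]
    exact_mod_cast hmax _
  set N : Submodule ℤ (Fin m → ℤ) := span ℤ (Set.range Bᵀ) with hNdef
  have hcard : N.toAddSubgroup.index = D := index_span_cols B hd0
  haveI hfinQ : Finite ((Fin m → ℤ) ⧸ N.toAddSubgroup) := by
    have : Nat.card ((Fin m → ℤ) ⧸ N.toAddSubgroup) ≠ 0 := by
      rw [show Nat.card ((Fin m → ℤ) ⧸ N.toAddSubgroup) = N.toAddSubgroup.index from rfl, hcard]
      omega
    exact (Nat.card_ne_zero.mp this).2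
  -- the injection
  have hq3 : ∀ j i, ((u j i + d) / d).toNat < 3 := by
    intro j i
    have h1 : u j i + d < 3 * d := by have := (abs_le.mp (hub j i)).2; linarith
    have h2 : (0:ℤ) ≤ u j i + d := by have := (abs_le.mp (hub j i)).1; linarith
    have h3 : (u j i + d) / d < 3 := by
      rw [Int.ediv_lt_iff_lt_mul hdpos]
      linarith
    have h4 : 0 ≤ (u j i + d) / d := Int.ediv_nonneg h2 (le_of_lt hdpos)
    omega
  set Φ : Fin n → (Fin m → Fin 3) × ((Fin m → ℤ) ⧸ N.toAddSubgroup) :=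
    fun j => (fun i => ⟨((u j i + d) / d).toNat, hq3 j i⟩,
      QuotientAddGroup.mk (fun i => A i j)) with hΦ
  have hinj : Function.Injective Φ := by
    intro j j' hjj'
    by_contra hne
    have h1 : ∀ i, ((u j i + d) / d).toNat = ((u j' i + d) / d).toNat := by
      intro i
      have := congrFun (congrArg Prod.fst hjj') i
      exact congrArg Fin.val this
    have h2 : (QuotientAddGroup.mk (s := N.toAddSubgroup) (fun i => A i j) :
        (Fin m → ℤ) ⧸ N.toAddSubgroup) = QuotientAddGroup.mk (fun i => A i j') :=
      congrArg Prod.snd hjj'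
    have hmem : (fun i => A i j) - (fun i => A i j') ∈ N :=
      (QuotientAddGroup.eq_iff_sub_mem).mp h2
    have hmem' : (fun i => A i j) - (fun i => A i j') ∈ LinearMap.range B.mulVecLin := by
      rw [Matrix.range_mulVecLin]
      exact hmem
    obtain ⟨z, hz⟩ := hmem'
    -- u j - u j' = det B • z
    have hcr : u j - u j' = B.det • z := by
      have hlin : u j - u j' = B.cramer ((fun i => A i j) - (fun i => A i j')) := by
        rw [hu]; rw [map_sub]
      rw [hlin, ← hz]
      have : B.mulVecLin z = B *ᵥ z := rfl
      rw [this, Matrix.cramer_eq_adjugate_mulVec, Matrix.mulVec_mulVec, Matrix.adjugate_mul,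
        Matrix.smul_mulVec, Matrix.one_mulVec]
    have hdvd : ∀ i, d ∣ (u j i - u j' i) := by
      intro i
      have : u j i - u j' i = B.det * z i := by
        have := congrFun hcr i
        simpa using this
      rw [this]
      exact Dvd.dvd.mul_right (by rw [hddef, hDdef]; exact Int.natAbs_dvd.mpr dvd_rfl) _
    have huu : u j = u j' := by
      funext i
      have hx0 : (0:ℤ) ≤ u j i + d := by have := (abs_le.mp (hub j i)).1; linarith
      have hy0 : (0:ℤ) ≤ u j' i + d := by have := (abs_le.mp (hub j' i)).1; linarith
      have hq : (u j i + d) / d = (u j' i + d) / d := by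
        have := h1 i
        have h4 : 0 ≤ (u j i + d) / d := Int.ediv_nonneg hx0 (le_of_lt hdpos)
        have h5 : 0 ≤ (u j' i + d) / d := Int.ediv_nonneg hy0 (le_of_lt hdpos)
        omega
      have hr : (u j i + d) % d = (u j' i + d) % d := by
        have hdvd' : d ∣ ((u j' i + d) - (u j i + d)) := by
          have h6 := hdvd i
          have heq : (u j' i + d) - (u j i + d) = -(u j i - u j' i) := by ring
          rw [heq]; exact dvd_neg.mpr h6
        have hmq : (u j i + d) ≡ (u j' i + d) [ZMOD d] := Int.modEq_iff_dvd.mpr hdvd'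
        exact hmq
      have e1 := Int.mul_ediv_add_emod (u j i + d) d
      have e2 := Int.mul_ediv_add_emod (u j' i + d) d
      have : u j i + d = u j' i + d := by
        rw [← e1, ← e2, hq, hr]
      linarith
    -- conclude columns equal
    have hcols : (fun i => A i j) = (fun i => A i j') := by
      have hv1 : B *ᵥ u j = B.det • (fun i => A i j) := Matrix.mulVec_cramer B _
      have hv2 : B *ᵥ u j' = B.det • (fun i => A i j') := Matrix.mulVec_cramer B _
      have : B.det • (fun i => A i j) = B.det • (fun i => A i j') := by
        rw [← hv1, ← hv2, huu]
      funext i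
      have := congrFun this i
      simp only [Pi.smul_apply, smul_eq_mul] at this
      exact mul_left_cancel₀ hd0 this
    exact (hdiff.2 j j' hne).1 hcols
  -- count
  have hcount : n ≤ 3 ^ m * D := by
    have h1 : Nat.card (Fin n) ≤
        Nat.card ((Fin m → Fin 3) × ((Fin m → ℤ) ⧸ N.toAddSubgroup)) :=
      Nat.card_le_card_of_injective Φ hinj
    rw [Nat.card_eq_fintype_card, Fintype.card_fin] at h1
    rw [Nat.card_prod] at h1
    have h2 : Nat.card (Fin m → Fin 3) = 3 ^ m := by
      rw [Nat.card_eq_fintype_card]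
      simp
    rw [h2, show Nat.card ((Fin m → ℤ) ⧸ N.toAddSubgroup) = N.toAddSubgroup.index from rfl,
      hcard] at h1
    exact h1
  have hDΔ : D ≤ Δ := by
    have := hmod g
    rw [Int.abs_eq_natAbs] at this
    exact_mod_cast this
  calc n ≤ 3 ^ m * D := hcount
    _ ≤ 3 ^ m * Δ := Nat.mul_le_mul_left _ hDΔ
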